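/- In the beauty contest environment, fix a K-class analogy partition (Θ_k)_{k=1}^K and 0 < r < 1. If a₁, a₂ : Θ → ℝ are ν-integrable and satisfy, for each i = 1,2 and each k, a_i(θ) = (1 − r)θ + r E_ν[a_j | Θ_k] for ν-almost every θ ∈ Θ_k (j ≠ i), then E_ν[a_i | Θ_k] = θ̄_k for every i and k, and a₁(θ) = a₂(θ) = (1 − r)θ + r θ̄_k for ν-almost every θ ∈ Θ_k. In particular, the ABEE given the partition exists, is symmetric, and is unique up to ν-null sets. -/

import Mathlib

open MeasureTheory

/-- Conditional mean of `h` on the set `S` under the measure `ν`. -/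
noncomputable def condMean (ν : Measure ℝ) (h : ℝ → ℝ) (S : Set ℝ) : ℝ :=
  (∫ θ in S, h θ ∂ν) / (ν S).toReal

/-- **Uniqueness and symmetry of the ABEE in the beauty contest game** given a `K`-class
analogy partition `(Θ k)` of the (bounded) support of the fundamental `θ ∼ ν`.

If the integrable strategies `a₁, a₂` satisfy, for each player `i` and each class `k`,
`a_i θ = (1 - r) θ + r E_ν[a_j | Θ k]` for ν-a.e. `θ ∈ Θ k`, then every conditional mean
`E_ν[a_i | Θ k]` equals `θ̄_k = E_ν[θ | Θ k]`, and for ν-a.e. `θ ∈ Θ k` both players play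
`(1 - r) θ + r θ̄_k`. -/
theorem beauty_contest_ABEE_unique
    (ν : Measure ℝ) [IsProbabilityMeasure ν]
    (K : ℕ) (hK : 1 ≤ K) (Θ : Fin K → Set ℝ)
    (hmeas : ∀ k, MeasurableSet (Θ k))
    (hdisj : Pairwise fun k k' => Disjoint (Θ k) (Θ k'))
    (hcover : ν (⋃ k, Θ k) = 1)
    (hpos : ∀ k, 0 < ν (Θ k))
    (hbdd : Bornology.IsBounded (⋃ k, Θ k))
    (r : ℝ) (hr0 : 0 < r) (hr1 : r < 1)
    (a₁ a₂ : ℝ → ℝ) (hi₁ : Integrable a₁ ν) (hi₂ : Integrable a₂ ν)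
    (hbe₁ : ∀ k, ∀ᵐ θ ∂ν, θ ∈ Θ k →
      a₁ θ = (1 - r) * θ + r * condMean ν a₂ (Θ k))
    (hbe₂ : ∀ k, ∀ᵐ θ ∂ν, θ ∈ Θ k →
      a₂ θ = (1 - r) * θ + r * condMean ν a₁ (Θ k)) :
    (∀ k, condMean ν a₁ (Θ k) = condMean ν (fun θ => θ) (Θ k) ∧
          condMean ν a₂ (Θ k) = condMean ν (fun θ => θ) (Θ k)) ∧
    (∀ k, ∀ᵐ θ ∂ν, θ ∈ Θ k →
      a₁ θ = (1 - r) * θ + r * condMean ν (fun θ' => θ') (Θ k) ∧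
      a₂ θ = (1 - r) * θ + r * condMean ν (fun θ' => θ') (Θ k)) := by

  -- Bound on the support
  obtain ⟨C, hC⟩ := hbdd.exists_norm_le
  -- Key computation: conditional mean of an affine-on-class function
  have key : ∀ (f : ℝ → ℝ), Integrable f ν → ∀ (c : ℝ) (k : Fin K),
      (∀ᵐ θ ∂ν, θ ∈ Θ k → f θ = (1 - r) * θ + r * c) →
      condMean ν f (Θ k) = (1 - r) * condMean ν (fun θ => θ) (Θ k) + r * c := by
    intro f hf c k hae
    have hmk := hmeas k
    have hfin : ν (Θ k) ≠ ⊤ := measure_ne_top ν _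
    have htpos : 0 < (ν (Θ k)).toReal := ENNReal.toReal_pos (hpos k).ne' hfin
    have hid : IntegrableOn (fun θ : ℝ => θ) (Θ k) ν := by
      apply Measure.integrableOn_of_bounded hfin aestronglyMeasurable_id
      filter_upwards [ae_restrict_mem hmk] with θ hθ
      exact hC θ (Set.mem_iUnion.2 ⟨k, hθ⟩)
    have h1 : ∫ θ in Θ k, f θ ∂ν = ∫ θ in Θ k, ((1 - r) * θ + r * c) ∂ν := by
      apply setIntegral_congr_ae hmk
      filter_upwards [hae] with θ h hθ; exact h hθ
    have h2 : ∫ θ in Θ k, ((1 - r) * θ + r * c) ∂ν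
        = (1 - r) * (∫ θ in Θ k, θ ∂ν) + r * c * (ν (Θ k)).toReal := by
      rw [integral_add (hid.const_mul _) (integrableOn_const hfin)]
      rw [integral_const, integral_const_mul]
      simp [mul_comm, measureReal_def]
    simp only [condMean, h1, h2]
    field_simp
  have hkey₁ := fun k => key a₁ hi₁ _ k (hbe₁ k)
  have hkey₂ := fun k => key a₂ hi₂ _ k (hbe₂ k)
  have hmeans : ∀ k, condMean ν a₁ (Θ k) = condMean ν (fun θ => θ) (Θ k) ∧
      condMean ν a₂ (Θ k) = condMean ν (fun θ => θ) (Θ k) := by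
    intro k
    have h1 := hkey₁ k
    have h2 := hkey₂ k
    set m1 := condMean ν a₁ (Θ k)
    set m2 := condMean ν a₂ (Θ k)
    set t := condMean ν (fun θ => θ) (Θ k)
    have hm : m1 = m2 := by
      have h3 : (1 + r) * (m1 - m2) = 0 := by linear_combination h1 - h2
      rcases mul_eq_zero.mp h3 with h | h
      · linarith
      · linarith
    have h4 : (1 - r) * (m1 - t) = 0 := by linear_combination h1 - r * hm
    rcases mul_eq_zero.mp h4 with h | h
    · exfalso; linarith
    · constructor <;> linarith
  refine ⟨hmeans, fun k => ?_⟩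
  filter_upwards [hbe₁ k, hbe₂ k] with θ h1 h2 hθ
  rw [(hmeans k).1, (hmeans k).2] at *
  exact ⟨h1 hθ, h2 hθ⟩
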